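/- Let a ∈ ℝ and let u ∈ C²(ℝⁿ₊) satisfy div(yₙ^a ∇u) = 0 in ℝⁿ₊. Then for every x ∈ ∂ℝⁿ₊ and every λ > 0, the Kelvin-type transform u_{x,λ}(y) = (λ/|y−x|)^{n−2+a} u(x + λ²(y−x)/|y−x|²) satisfies div(yₙ^a ∇u_{x,λ}) = 0 in ℝⁿ₊. -/

import Mathlib

open Real Filter

/-- Partial derivative of `u` in the `i`-th coordinate direction. -/
noncomputable def partialD {n : ℕ} (i : Fin n) (u : EuclideanSpace ℝ (Fin n) → ℝ)
    (y : EuclideanSpace ℝ (Fin n)) : ℝ :=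
  fderiv ℝ u y (EuclideanSpace.single i 1)

/-- The Laplacian of `u`, as a sum of repeated partial derivatives. -/
noncomputable def lapl {n : ℕ} (u : EuclideanSpace ℝ (Fin n) → ℝ)
    (y : EuclideanSpace ℝ (Fin n)) : ℝ :=
  ∑ j, partialD j (fun z => partialD j u z) y

/-- The weighted operator `div(yᵢ^a ∇u) = yᵢ^a Δu + a yᵢ^(a-1) ∂u/∂yᵢ`,
where `i` plays the role of the last coordinate. -/
noncomputable def divA {n : ℕ} (i : Fin n) (a : ℝ) (u : EuclideanSpace ℝ (Fin n) → ℝ)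
    (y : EuclideanSpace ℝ (Fin n)) : ℝ :=
  (y i) ^ a * lapl u y + a * (y i) ^ (a - 1) * partialD i u y

/-- The inversion `y ↦ x + λ²(y-x)/|y-x|²` centered at `x` with radius `λ`. -/
noncomputable def inversion {n : ℕ} (x : EuclideanSpace ℝ (Fin n)) (lam : ℝ)
    (y : EuclideanSpace ℝ (Fin n)) : EuclideanSpace ℝ (Fin n) :=
  x + (lam ^ 2 / ‖y - x‖ ^ 2) • (y - x)

/-- The Kelvin-type transform `u_{x,λ}(y) = (λ/|y-x|)^(n-2+a) u(x + λ²(y-x)/|y-x|²)`. -/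
noncomputable def kelvin {n : ℕ} (a : ℝ) (x : EuclideanSpace ℝ (Fin n)) (lam : ℝ)
    (u : EuclideanSpace ℝ (Fin n) → ℝ) (y : EuclideanSpace ℝ (Fin n)) : ℝ :=
  (lam / ‖y - x‖) ^ ((n : ℝ) - 2 + a) * u (inversion x lam y)

variable {n : ℕ}

/- ### basic helpers -/

lemma sum_single_smul (v : EuclideanSpace ℝ (Fin n)) :
    ∑ j, v j • EuclideanSpace.single j (1:ℝ) = v := by
  ext k
  rw [show ((∑ j, v j • EuclideanSpace.single j (1:ℝ)) k)
      = ∑ j, (v j • EuclideanSpace.single j (1:ℝ)) k from by rw [WithLp.ofLp_sum, Finset.sum_apply]]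
  simp [EuclideanSpace.single_apply]

lemma clm_eval (f : EuclideanSpace ℝ (Fin n) →L[ℝ] ℝ) (v : EuclideanSpace ℝ (Fin n)) :
    f v = ∑ j, v j * f (EuclideanSpace.single j 1) := by
  conv_lhs => rw [← sum_single_smul v]
  rw [map_sum]
  simp [smul_eq_mul]

lemma norm_sq_eq (w : EuclideanSpace ℝ (Fin n)) : ‖w‖^2 = ∑ j, (w j)^2 := by
  rw [EuclideanSpace.norm_eq, Real.sq_sqrt (by positivity)]
  simp [Real.norm_eq_abs, sq_abs]

lemma isOpen_Omega (i : Fin n) : IsOpen {y : EuclideanSpace ℝ (Fin n) | 0 < y i} :=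
  isOpen_lt continuous_const ((continuous_apply i).comp (PiLp.continuous_ofLp 2 _))

lemma partialD_congr {f g : EuclideanSpace ℝ (Fin n) → ℝ} {s : Set (EuclideanSpace ℝ (Fin n))}
    (hs : IsOpen s) (h : ∀ z ∈ s, f z = g z) {y : EuclideanSpace ℝ (Fin n)} (hy : y ∈ s)
    (j : Fin n) : partialD j f y = partialD j g y := by
  unfold partialD
  rw [Filter.EventuallyEq.fderiv_eq (Filter.eventuallyEq_of_mem (hs.mem_nhds hy) h)]

lemma divA_congr {f g : EuclideanSpace ℝ (Fin n) → ℝ} {s : Set (EuclideanSpace ℝ (Fin n))}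
    (hs : IsOpen s) (h : ∀ z ∈ s, f z = g z) {y : EuclideanSpace ℝ (Fin n)} (hy : y ∈ s)
    (i : Fin n) (a : ℝ) : divA i a f y = divA i a g y := by
  unfold divA lapl
  rw [partialD_congr hs h hy i]
  congr 2
  refine Finset.sum_congr rfl fun j _ => ?_
  exact partialD_congr hs (fun z hz => partialD_congr hs h hz j) hy j

/- ### derivative building blocks -/

lemma hasFDerivAt_normsq (x z : EuclideanSpace ℝ (Fin n)) :
    HasFDerivAt (fun w => ‖w - x‖^2) (2 • innerSL ℝ (z - x)) z := by
  have h := ((hasFDerivAt_id z).sub_const x).norm_sq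
  simpa using h

lemma hasFDerivAt_rpowN (x z : EuclideanSpace ℝ (Fin n)) (p : ℝ) (hz : ‖z - x‖^2 ≠ 0) :
    HasFDerivAt (fun w => (‖w - x‖^2) ^ p)
      ((p * (‖z - x‖^2) ^ (p - 1)) • (2 • innerSL ℝ (z - x))) z :=
  by have := (Real.hasDerivAt_rpow_const (p := p) (Or.inl hz)).comp_hasFDerivAt z (hasFDerivAt_normsq x z); exact this

lemma hasFDerivAt_S (x z : EuclideanSpace ℝ (Fin n)) (lam : ℝ) (hz : ‖z - x‖^2 ≠ 0) :
    HasFDerivAt (fun w => lam^2 / ‖w - x‖^2)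
      ((-(lam^2) / (‖z - x‖^2)^2) • (2 • innerSL ℝ (z - x))) z := by
  have h1 : HasDerivAt (fun t : ℝ => lam^2 / t)
      ((0 * (‖z - x‖^2) - lam^2 * 1)/(‖z - x‖^2)^2) (‖z - x‖^2) :=
    (hasDerivAt_const _ _).div (hasDerivAt_id _) hz
  have h2 := h1.comp_hasFDerivAt z (hasFDerivAt_normsq x z)
  exact h2.congr_fderiv (by congr 1; ring)

lemma hasFDerivAt_inversion (x : EuclideanSpace ℝ (Fin n)) (lam : ℝ)
    (z : EuclideanSpace ℝ (Fin n)) (hz : ‖z - x‖^2 ≠ 0) :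
    HasFDerivAt (inversion x lam)
      ((lam^2/‖z - x‖^2) • (ContinuousLinearMap.id ℝ _) +
        ((-(lam^2) / (‖z - x‖^2)^2) • (2 • innerSL ℝ (z - x))).smulRight (z - x)) z := by
  unfold inversion
  exact (((hasFDerivAt_S x z lam hz).smul ((hasFDerivAt_id z).sub_const x)).const_add x)

/- ### the regularized Kelvin transform and its first partials -/

noncomputable def Kf (a : ℝ) (x : EuclideanSpace ℝ (Fin n)) (lam : ℝ)
    (u : EuclideanSpace ℝ (Fin n) → ℝ) (z : EuclideanSpace ℝ (Fin n)) : ℝ :=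
  lam ^ ((n:ℝ) - 2 + a) *
    ((‖z - x‖^2) ^ (-(((n:ℝ) - 2 + a)/2)) * u (inversion x lam z))

noncomputable def phi (a : ℝ) (x : EuclideanSpace ℝ (Fin n)) (lam : ℝ)
    (u : EuclideanSpace ℝ (Fin n) → ℝ) (j : Fin n) (z : EuclideanSpace ℝ (Fin n)) : ℝ :=
  lam ^ ((n:ℝ) - 2 + a) *
    ((‖z - x‖^2) ^ (-(((n:ℝ) - 2 + a)/2)) *
      ((-(lam^2) * (2 * (z j - x j)) * ((‖z - x‖^2) * (‖z - x‖^2))⁻¹ *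
          fderiv ℝ u (inversion x lam z) (z - x))
        + (lam^2 / ‖z - x‖^2) *
            fderiv ℝ u (inversion x lam z) (EuclideanSpace.single j 1))
    + u (inversion x lam z) *
        ((-(((n:ℝ) - 2 + a)/2) * (‖z - x‖^2) ^ (-(((n:ℝ) - 2 + a)/2) - 1)) *
          (2 * (z j - x j))))

lemma partialD_Kf (a : ℝ) (x : EuclideanSpace ℝ (Fin n)) (lam : ℝ)
    (u : EuclideanSpace ℝ (Fin n) → ℝ) (z : EuclideanSpace ℝ (Fin n))
    (hz : ‖z - x‖^2 ≠ 0) (hu1 : DifferentiableAt ℝ u (inversion x lam z)) (j : Fin n) :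
    fderiv ℝ (Kf a x lam u) z (EuclideanSpace.single j 1) = phi a x lam u j z := by
  have hI := hasFDerivAt_inversion x lam z hz
  have hv : HasFDerivAt (fun w => u (inversion x lam w))
      ((fderiv ℝ u (inversion x lam z)).comp
        ((lam^2/‖z - x‖^2) • (ContinuousLinearMap.id ℝ _) +
          ((-(lam^2) / (‖z - x‖^2)^2) • (2 • innerSL ℝ (z - x))).smulRight (z - x))) z :=
    hu1.hasFDerivAt.comp z hI
  have hg := hasFDerivAt_rpowN x z (-(((n:ℝ) - 2 + a)/2)) hz
  have hK := (hg.mul hv).const_mul (lam ^ ((n:ℝ) - 2 + a))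
  have hthis : HasFDerivAt (Kf a x lam u) _ z := hK
  rw [hthis.fderiv]
  simp only [phi, ContinuousLinearMap.smul_apply, ContinuousLinearMap.add_apply,
    ContinuousLinearMap.comp_apply, ContinuousLinearMap.coe_smul', Pi.smul_apply,
    ContinuousLinearMap.id_apply, ContinuousLinearMap.smulRight_apply,
    innerSL_apply_apply, EuclideanSpace.inner_single_right, map_add, map_smul,
    smul_eq_mul, RCLike.inner_apply, starRingEnd_apply, star_trivial, nsmul_eq_mul, PiLp.sub_apply]
  field_simp
  ring

set_option maxHeartbeats 2000000 in
lemma partialD_phi (a : ℝ) (x : EuclideanSpace ℝ (Fin n)) (lam : ℝ)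
    (u : EuclideanSpace ℝ (Fin n) → ℝ) (y : EuclideanSpace ℝ (Fin n))
    (hz : ‖y - x‖^2 ≠ 0)
    (hu1 : DifferentiableAt ℝ u (inversion x lam y))
    (hu2 : DifferentiableAt ℝ (fderiv ℝ u) (inversion x lam y)) (j : Fin n)
    (β N P G Uj Bzz Bez Bze Bee v0 : ℝ)
    (hβ : β = ((n:ℝ) - 2 + a)/2) (hN : N = ‖y - x‖^2) (hP : P = lam^2)
    (hG : G = fderiv ℝ u (inversion x lam y) (y - x))
    (hUj : Uj = fderiv ℝ u (inversion x lam y) (EuclideanSpace.single j 1))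
    (hBzz : Bzz = fderiv ℝ (fderiv ℝ u) (inversion x lam y) (y - x) (y - x))
    (hBez : Bez = fderiv ℝ (fderiv ℝ u) (inversion x lam y) (EuclideanSpace.single j 1) (y - x))
    (hBze : Bze = fderiv ℝ (fderiv ℝ u) (inversion x lam y) (y - x) (EuclideanSpace.single j 1))
    (hBee : Bee = fderiv ℝ (fderiv ℝ u) (inversion x lam y) (EuclideanSpace.single j 1)
      (EuclideanSpace.single j 1))
    (hv0 : v0 = u (inversion x lam y)) :
    fderiv ℝ (phi a x lam u j) y (EuclideanSpace.single j 1) =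
      (lam ^ ((n:ℝ) - 2 + a) *
        ( -4*β*(N^(-β-1))*(-2*P/N^2)*G + 8*P*(N^(-β))*G/N^3 + (N^(-β))*(-2*P/N^2)^2*Bzz
            + 4*β*(β+1)*(N^(-β-1-1))*v0 )) * (y j - x j)^2
      + (lam ^ ((n:ℝ) - 2 + a) *
          ( -4*β*(N^(-β-1))*(P/N) + 2*(N^(-β))*(-2*P/N^2) )) * ((y j - x j) * Uj)
      + (lam ^ ((n:ℝ) - 2 + a) * ((N^(-β))*(-2*P/N^2)*(P/N))) * ((y j - x j) * Bez)
      + (lam ^ ((n:ℝ) - 2 + a) * ((N^(-β))*(P/N)*(-2*P/N^2))) * ((y j - x j) * Bze)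
      + (lam ^ ((n:ℝ) - 2 + a) * ((N^(-β))*(P/N)^2)) * Bee
      + (lam ^ ((n:ℝ) - 2 + a) *
          ( -2*P/N^2*(N^(-β))*G - 2*β*(N^(-β-1))*v0 )) := by
  subst hβ hN hP hG hUj hBzz hBez hBze hBee hv0
  have hNd := hasFDerivAt_normsq x y
  have hB := hasFDerivAt_rpowN x y (-(((n:ℝ) - 2 + a)/2)) hz
  have hC := hasFDerivAt_rpowN x y (-(((n:ℝ) - 2 + a)/2) - 1) hz
  have hS := hasFDerivAt_S x y lam hz
  have hI := hasFDerivAt_inversion x lam y hz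
  have hproj : HasFDerivAt (fun w : EuclideanSpace ℝ (Fin n) => w j - x j)
      ((EuclideanSpace.proj j : EuclideanSpace ℝ (Fin n) →L[ℝ] ℝ)) y := by
    simpa using (EuclideanSpace.proj j (𝕜 := ℝ)).hasFDerivAt.sub_const (x j)
  have hinv2 := (hasDerivAt_inv (mul_ne_zero hz hz)).comp_hasFDerivAt y (hNd.mul hNd)
  have hDuI := hu2.hasFDerivAt.comp y hI
  have hG' := hDuI.clm_apply ((hasFDerivAt_id y).sub_const x)
  have hUj' := hDuI.clm_apply (hasFDerivAt_const (EuclideanSpace.single j (1:ℝ)) y)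
  have hvv := hu1.hasFDerivAt.comp y hI
  have hf1 := (hproj.const_mul (2:ℝ)).const_mul (-(lam^2))
  have hT1 := (hf1.mul hinv2).mul hG'
  have hT2 := hS.mul hUj'
  have hF1 := hB.mul (hT1.add hT2)
  have hR := (hC.const_mul (-(((n:ℝ) - 2 + a)/2))).mul (hproj.const_mul (2:ℝ))
  have hF2 := hvv.mul hR
  have hphi : HasFDerivAt (phi a x lam u j) _ y := (hF1.add hF2).const_mul (lam ^ ((n:ℝ) - 2 + a))
  rw [hphi.fderiv]
  simp only [ContinuousLinearMap.smul_apply, ContinuousLinearMap.add_apply,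
    ContinuousLinearMap.comp_apply, ContinuousLinearMap.coe_smul', Pi.smul_apply,
    ContinuousLinearMap.id_apply, ContinuousLinearMap.smulRight_apply,
    ContinuousLinearMap.flip_apply, ContinuousLinearMap.coe_comp', Function.comp_apply,
    innerSL_apply_apply, EuclideanSpace.inner_single_right, map_add, map_smul,
    smul_eq_mul, RCLike.inner_apply, starRingEnd_apply, star_trivial,
    ContinuousLinearMap.zero_apply, map_zero, PiLp.proj_apply,
    EuclideanSpace.single_apply, if_pos rfl, nsmul_eq_mul, PiLp.sub_apply, Pi.mul_apply]
  simp only [Pi.mul_apply, Pi.add_apply, Function.comp_apply, id_eq, if_true, Nat.cast_ofNat]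
  generalize (‖y - x‖^2) ^ (-(((n:ℝ) - 2 + a)/2) - 1 - 1) = C2
  generalize (‖y - x‖^2) ^ (-(((n:ℝ) - 2 + a)/2) - 1) = C1
  generalize (‖y - x‖^2) ^ (-(((n:ℝ) - 2 + a)/2)) = C0
  generalize ‖y - x‖ = r at hz ⊢
  have hr : r ≠ 0 := fun h => hz (by rw [h]; ring)
  field_simp
  ring

lemma sum_collect (c1 c2 c3 c4 c5 c6 N G Bzz L : ℝ) (t U Bez Bze Bee : Fin n → ℝ)
    (h1 : ∑ j, (t j)^2 = N) (h2 : ∑ j, t j * U j = G) (h3 : ∑ j, t j * Bez j = Bzz)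
    (h4 : ∑ j, t j * Bze j = Bzz) (h5 : ∑ j, Bee j = L) :
    ∑ j, (c1 * (t j)^2 + c2 * (t j * U j) + c3 * (t j * Bez j) + c4 * (t j * Bze j)
        + c5 * Bee j + c6)
      = c1 * N + c2 * G + c3 * Bzz + c4 * Bzz + c5 * L + (n:ℝ) * c6 := by
  rw [Finset.sum_add_distrib, Finset.sum_add_distrib, Finset.sum_add_distrib,
    Finset.sum_add_distrib, Finset.sum_add_distrib, ← Finset.mul_sum, ← Finset.mul_sum,
    ← Finset.mul_sum, ← Finset.mul_sum, ← Finset.mul_sum, h1, h2, h3, h4, h5,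
    Finset.sum_const, Finset.card_univ, Fintype.card_fin, nsmul_eq_mul]


set_option maxHeartbeats 4000000 in
/-- **Lemma 2.1 (invariance).** If `u ∈ C²(ℝⁿ₊)` satisfies `div(yₙ^a ∇u) = 0` on `ℝⁿ₊`,
then for any `x ∈ ∂ℝⁿ₊` and `λ > 0`, the Kelvin-type transform
`u_{x,λ}(y) = (λ/|y-x|)^(n-2+a) u(x + λ²(y-x)/|y-x|²)` satisfies the same equation. -/
theorem kelvin_invariance (n : ℕ) (a : ℝ) (i : Fin n) (hi : (i : ℕ) = n - 1)
    (u : EuclideanSpace ℝ (Fin n) → ℝ)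
    (hu : ContDiffOn ℝ 2 u {y | 0 < y i})
    (heq : ∀ y, 0 < y i → divA i a u y = 0)
    (x : EuclideanSpace ℝ (Fin n)) (hx : x i = 0) (lam : ℝ) (hlam : 0 < lam) :
    ∀ y : EuclideanSpace ℝ (Fin n), 0 < y i → divA i a (kelvin a x lam u) y = 0 := by
  intro y hy
  have hΩ : IsOpen {z : EuclideanSpace ℝ (Fin n) | 0 < z i} := isOpen_Omega i
  have hN0 : ∀ z : EuclideanSpace ℝ (Fin n), 0 < z i → 0 < ‖z - x‖^2 := by
    intro z hz
    rw [norm_sq_eq]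
    refine Finset.sum_pos' (fun j _ => sq_nonneg _) ⟨i, Finset.mem_univ i, ?_⟩
    have hzi : (z - x) i = z i := by simp [hx]
    rw [hzi]
    positivity
  have hmem : ∀ z : EuclideanSpace ℝ (Fin n), 0 < z i → 0 < (inversion x lam z) i := by
    intro z hz
    have hN := hN0 z hz
    have hv : (inversion x lam z) i = (lam^2/‖z - x‖^2) * z i := by
      simp [inversion, hx]
    rw [hv]
    exact mul_pos (div_pos (pow_pos hlam 2) hN) hz
  have hu1 : ∀ z : EuclideanSpace ℝ (Fin n), 0 < z i →
      DifferentiableAt ℝ u (inversion x lam z) := fun z hz =>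
    (hu.contDiffAt (hΩ.mem_nhds (hmem z hz))).differentiableAt (by norm_num)
  have hKeq : ∀ z ∈ {z : EuclideanSpace ℝ (Fin n) | 0 < z i},
      kelvin a x lam u z = Kf a x lam u z := by
    intro z hz
    have hN := hN0 z hz
    have hr : ‖z - x‖ ≠ 0 := by
      intro h; rw [h] at hN; norm_num at hN
    unfold kelvin Kf
    rw [Real.div_rpow hlam.le (norm_nonneg _), ← Real.rpow_natCast ‖z - x‖ 2,
      ← Real.rpow_mul (norm_nonneg _),
      show ((2:ℕ):ℝ) * (-(((n:ℝ) - 2 + a)/2)) = -((n:ℝ) - 2 + a) by push_cast; ring,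
      Real.rpow_neg (norm_nonneg _)]
    ring
  rw [divA_congr hΩ hKeq hy i a]
  have hNy : 0 < ‖y - x‖^2 := hN0 y hy
  have hu2p : DifferentiableAt ℝ (fderiv ℝ u) (inversion x lam y) :=
    ((hu.contDiffAt (hΩ.mem_nhds (hmem y hy))).fderiv_right (m := 1) (by norm_num)).differentiableAt one_ne_zero
  have hpd1 : ∀ (j : Fin n), ∀ z ∈ {z : EuclideanSpace ℝ (Fin n) | 0 < z i},
      partialD j (Kf a x lam u) z = phi a x lam u j z := fun j z hz =>
    partialD_Kf a x lam u z (hN0 z hz).ne' (hu1 z hz) j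
  have hpd2 : ∀ j : Fin n, partialD j (fun z => partialD j (Kf a x lam u) z) y
      = fderiv ℝ (phi a x lam u j) y (EuclideanSpace.single j 1) := by
    intro j
    have hev : (fun z => partialD j (Kf a x lam u) z) =ᶠ[nhds y] phi a x lam u j :=
      Filter.eventuallyEq_of_mem (hΩ.mem_nhds hy) (hpd1 j)
    show fderiv ℝ (fun z => partialD j (Kf a x lam u) z) y (EuclideanSpace.single j 1) = _
    rw [hev.fderiv_eq]
  have h1 : ∑ j, (y j - x j)^2 = ‖y - x‖^2 := by
    rw [norm_sq_eq]
    exact Finset.sum_congr rfl fun j _ => by simp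
  have h2 : ∑ j, (y j - x j) * fderiv ℝ u (inversion x lam y) (EuclideanSpace.single j 1)
      = fderiv ℝ u (inversion x lam y) (y - x) := by
    rw [clm_eval (fderiv ℝ u (inversion x lam y)) (y - x)]
    exact Finset.sum_congr rfl fun j _ => by simp
  have h3 : ∑ j, (y j - x j) *
        fderiv ℝ (fderiv ℝ u) (inversion x lam y) (EuclideanSpace.single j 1) (y - x)
      = fderiv ℝ (fderiv ℝ u) (inversion x lam y) (y - x) (y - x) := by
    have hc := clm_eval ((fderiv ℝ (fderiv ℝ u) (inversion x lam y)).flip (y - x)) (y - x)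
    simp only [ContinuousLinearMap.flip_apply] at hc
    rw [hc]
    exact Finset.sum_congr rfl fun j _ => by simp
  have h4 : ∑ j, (y j - x j) *
        fderiv ℝ (fderiv ℝ u) (inversion x lam y) (y - x) (EuclideanSpace.single j 1)
      = fderiv ℝ (fderiv ℝ u) (inversion x lam y) (y - x) (y - x) := by
    rw [clm_eval (fderiv ℝ (fderiv ℝ u) (inversion x lam y) (y - x)) (y - x)]
    exact Finset.sum_congr rfl fun j _ => by simp
  have hQ := fun j : Fin n => (hpd2 j).trans
    (partialD_phi a x lam u y hNy.ne' (hu1 y hy) hu2p j _ _ _ _ _ _ _ _ _ _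
      rfl rfl rfl rfl rfl rfl rfl rfl rfl rfl)
  have hlapl : lapl (Kf a x lam u) y = _ :=
    (Finset.sum_congr rfl fun j _ => hQ j).trans
      (sum_collect _ _ _ _ _ _ _ _ _ _ _ _ _ _ _ h1 h2 h3 h4 rfl)
  -- the PDE at the reflected point
  have hpde := heq (inversion x lam y) (hmem y hy)
  unfold divA at hpde
  have hlapl_u : lapl u (inversion x lam y) = ∑ j, fderiv ℝ (fderiv ℝ u) (inversion x lam y)
      (EuclideanSpace.single j 1) (EuclideanSpace.single j 1) := by
    unfold lapl
    refine Finset.sum_congr rfl fun j _ => ?_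
    show fderiv ℝ (fun z => fderiv ℝ u z (EuclideanSpace.single j 1)) (inversion x lam y)
      (EuclideanSpace.single j 1) = _
    rw [(hu2p.hasFDerivAt.clm_apply
      (hasFDerivAt_const (EuclideanSpace.single j (1:ℝ)) (inversion x lam y))).fderiv]
    simp
  have hpi : (inversion x lam y) i = lam^2/‖y - x‖^2 * (y i) := by
    simp [inversion, hx]
  have hq : (0:ℝ) < lam^2/‖y - x‖^2 := div_pos (pow_pos hlam 2) hNy
  rw [hlapl_u, hpi, Real.mul_rpow hq.le hy.le, Real.mul_rpow hq.le hy.le,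
    show partialD i u (inversion x lam y)
      = fderiv ℝ u (inversion x lam y) (EuclideanSpace.single i 1) from rfl] at hpde
  have h1q : (lam^2/‖y - x‖^2)^(1-a) * (lam^2/‖y - x‖^2)^a = lam^2/‖y - x‖^2 := by
    rw [← Real.rpow_add hq]
    norm_num
  have h2q : (lam^2/‖y - x‖^2)^(1-a) * (lam^2/‖y - x‖^2)^(a-1) = 1 := by
    rw [← Real.rpow_add hq]
    norm_num
  have hPN : lam^2/‖y - x‖^2 * ‖y - x‖^2 = lam^2 := div_mul_cancel₀ _ hNy.ne'
  have hkey : lam^2 * (y i)^a * (∑ j, fderiv ℝ (fderiv ℝ u) (inversion x lam y)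
        (EuclideanSpace.single j 1) (EuclideanSpace.single j 1))
      + a * ‖y - x‖^2 * (y i)^(a-1) * fderiv ℝ u (inversion x lam y)
        (EuclideanSpace.single i 1) = 0 := by
    linear_combination (‖y - x‖^2 * (lam^2/‖y - x‖^2)^(1-a)) * hpde
      - ((y i)^a * (∑ j, fderiv ℝ (fderiv ℝ u) (inversion x lam y)
          (EuclideanSpace.single j 1) (EuclideanSpace.single j 1)) * ‖y - x‖^2) * h1q
      - (a * ‖y - x‖^2 * (y i)^(a-1) * fderiv ℝ u (inversion x lam y)
          (EuclideanSpace.single i 1)) * h2q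
      - ((y i)^a * (∑ j, fderiv ℝ (fderiv ℝ u) (inversion x lam y)
          (EuclideanSpace.single j 1) (EuclideanSpace.single j 1))) * hPN
  -- final assembly
  unfold divA
  rw [hlapl, hpd1 i y hy]
  unfold phi
  rw [hx]
  have hW1 : (‖y - x‖^2) ^ (-(((n:ℝ) - 2 + a)/2) - 1)
      = (‖y - x‖^2) ^ (-(((n:ℝ) - 2 + a)/2)) / ‖y - x‖^2 := by
    rw [Real.rpow_sub hNy, Real.rpow_one]
  have hW2 : (‖y - x‖^2) ^ (-(((n:ℝ) - 2 + a)/2) - 1 - 1)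
      = (‖y - x‖^2) ^ (-(((n:ℝ) - 2 + a)/2)) / ‖y - x‖^2 / ‖y - x‖^2 := by
    rw [Real.rpow_sub hNy, Real.rpow_sub hNy, Real.rpow_one]
  rw [hW2, hW1]
  have hT : (y i)^(a-1) * (y i) = (y i)^a := by
    rw [← Real.rpow_add_one hy.ne' (a-1)]
    norm_num
  have hr : ‖y - x‖ ≠ 0 := fun h => by simp [h] at hNy
  linear_combination (norm := (field_simp; ring1))
    (lam ^ ((n:ℝ) - 2 + a) * ((‖y - x‖^2) ^ (-(((n:ℝ) - 2 + a)/2))) * lam^2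
      / (‖y - x‖^2 * ‖y - x‖^2)) * hkey
    + (a * lam ^ ((n:ℝ) - 2 + a) *
        ((‖y - x‖^2) ^ (-(((n:ℝ) - 2 + a)/2)) * (-2*lam^2/(‖y - x‖^2 * ‖y - x‖^2)) *
            fderiv ℝ u (inversion x lam y) (y - x)
          + u (inversion x lam y) *
            (-2*(((n:ℝ) - 2 + a)/2) * ((‖y - x‖^2) ^ (-(((n:ℝ) - 2 + a)/2)) / ‖y - x‖^2)))) * hT
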